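/- arXiv:1011.2860 — 3 statements merged into one kernel-verified Lean document; each statement's English description precedes it below -/
import Mathlib

section
/- Let R be a commutative ring, D a subring of R with the same identity 1, and I an ideal of R⟨X⟩ = R⟨X₁,...,Xₙ⟩ generated by a subset G ⊆ D⟨X⟩ which is a monic Gröbner basis of I in R⟨X⟩ with respect to a monomial ordering on B_R. Set Λ = (D⟨X⟩ + I)/I ⊆ R⟨X⟩/I. Then for any proper ideal ω of D such that G ⊄ ωD⟨X⟩, there is an isomorphism of k-algebras Λ/ωΛ ≅ k⟨X⟩/⟨Ḡ⟩, where k = D/ω, k⟨X⟩ = k⟨X₁,...,Xₙ⟩ is the free k-algebra, and Ḡ is the canonical image of G in D⟨X⟩/ωD⟨X⟩ ≅ k⟨X⟩. -/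
open scoped Classical

/-- Words in the alphabet `X₁,...,Xₙ`: the standard basis `B` of monomials of the free algebra. -/
abbrev Word (n : ℕ) : Type := FreeMonoid (Fin n)

/-- The free `R`-algebra `R⟨X₁,...,Xₙ⟩`, realized as the monoid algebra on words. -/
abbrev FreeAlg (R : Type) [CommRing R] (n : ℕ) : Type := MonoidAlgebra R (Word n)

/-- `v` divides `u` as words: `u = w * v * s` for some words `w, s`. -/
def WordDvd {n : ℕ} (v u : Word n) : Prop := ∃ w s : Word n, u = w * v * s

/-- A monomial ordering on the words in `X₁,...,Xₙ`: a well-ordering `≺` such that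
(M1) `u ≺ v` implies `w*u*s ≺ w*v*s`, and (M2) `w = u*v` implies `u ⪯ w` and `v ⪯ w`. -/
structure MonomialOrdering (n : ℕ) where
  lt : Word n → Word n → Prop
  strictTotal : IsStrictTotalOrder (Word n) lt
  wellFounded : WellFounded lt
  mul_compat : ∀ w u v s : Word n, lt u v → lt (w * u * s) (w * v * s)
  factor_le : ∀ u v : Word n, ¬ lt (u * v) u ∧ ¬ lt (u * v) v

namespace MonomialOrdering

/-- `u ⪯ v` for a monomial ordering. -/
def le {n : ℕ} (o : MonomialOrdering n) (u v : Word n) : Prop := u = v ∨ o.lt u v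

end MonomialOrdering

/-- The leading monomial `LM(f)` of `f`: the `≺`-greatest word occurring in `f`
(with junk value `1` if `f = 0`). -/
noncomputable def LM {R : Type} [CommRing R] {n : ℕ} (o : MonomialOrdering n)
    (f : FreeAlg R n) : Word n :=
  if h : ∃ w, w ∈ f.coeff.support ∧ ∀ u ∈ f.coeff.support, o.le u w then h.choose else 1

/-- The leading coefficient `LC(f)` of `f`: the coefficient of `LM(f)` in `f`. -/
noncomputable def LC {R : Type} [CommRing R] {n : ℕ} (o : MonomialOrdering n)
    (f : FreeAlg R n) : R := f.coeff (LM o f)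

/-- A subset `G` is monic if every `g ∈ G` is nonzero with leading coefficient `1`. -/
def IsMonicSet {R : Type} [CommRing R] {n : ℕ} (o : MonomialOrdering n)
    (G : Set (FreeAlg R n)) : Prop := ∀ g ∈ G, g ≠ 0 ∧ LC o g = 1

/-- `G` is a monic Gröbner basis of the two-sided ideal `I`: a monic subset of `I` such that
the leading monomial of every nonzero `f ∈ I` is divisible by `LM(g)` for some `g ∈ G`. -/
def IsMonicGB {R : Type} [CommRing R] {n : ℕ} (o : MonomialOrdering n)
    (G : Set (FreeAlg R n)) (I : TwoSidedIdeal (FreeAlg R n)) : Prop :=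
  (∀ g ∈ G, g ∈ I) ∧ IsMonicSet o G ∧
    ∀ f : FreeAlg R n, f ∈ I → f ≠ 0 → ∃ g ∈ G, WordDvd (LM o g) (LM o f)

/-- The word `u` viewed as a monomial (with coefficient `1`) of the free algebra. -/
noncomputable def mono (R : Type) [CommRing R] {n : ℕ} (u : Word n) : FreeAlg R n :=
  MonoidAlgebra.single u 1

/-- `f` has a Gröbner representation `f = Σ_{i} λ_i u_i g_i v_i` with
`LM(u_i g_i v_i) ⪯ LM(f)` whenever `λ_i ≠ 0`. -/
def HasGroebnerRep {R : Type} [CommRing R] {n : ℕ} (o : MonomialOrdering n)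
    (G : Set (FreeAlg R n)) (f : FreeAlg R n) : Prop :=
  ∃ (m : ℕ) (lam : Fin m → R) (u v : Fin m → Word n) (g : Fin m → FreeAlg R n),
    (∀ i, g i ∈ G) ∧
    f = ∑ i, lam i • (mono R (u i) * g i * mono R (v i)) ∧
    ∀ i, lam i ≠ 0 → o.le (LM o (mono R (u i) * g i * mono R (v i))) (LM o f)

/-- The set `N(G)` of normal words (mod `G`): words divisible by no `LM(g)`, `g ∈ G`. -/
def NSet {R : Type} [CommRing R] {n : ℕ} (o : MonomialOrdering n)
    (G : Set (FreeAlg R n)) : Set (Word n) :=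
  {u : Word n | ∀ g ∈ G, ¬ WordDvd (LM o g) u}

/-- `f` is a normal element (mod `G`): every word occurring in `f` is normal. -/
def IsNormal {R : Type} [CommRing R] {n : ℕ} (o : MonomialOrdering n)
    (G : Set (FreeAlg R n)) (f : FreeAlg R n) : Prop :=
  ∀ u ∈ f.coeff.support, u ∈ NSet o G

/-- `G` is LM-reduced: `LM(g) ∤ LM(g')` for distinct `g, g' ∈ G`. -/
def LMReduced {R : Type} [CommRing R] {n : ℕ} (o : MonomialOrdering n)
    (G : Set (FreeAlg R n)) : Prop :=
  ∀ g ∈ G, ∀ g' ∈ G, g ≠ g' → ¬ WordDvd (LM o g) (LM o g')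

/-- The canonical inclusion `S⟨X₁,...,Xₙ⟩ → T⟨X₁,...,Xₙ⟩` induced by the coefficient
algebra map `S → T`; it sends `Σ λ_u · u` to `Σ λ_u · u` (coefficients mapped along
`algebraMap S T`). -/
noncomputable def coeffIncl (S : Type) [CommRing S] (T : Type) [CommRing T] [Algebra S T]
    (n : ℕ) : FreeAlg S n →ₐ[S] FreeAlg T n :=
  MonoidAlgebra.lift S (FreeAlg T n) (Word n) (MonoidAlgebra.of T (Word n))

/-- The quotient ring `A = R⟨X₁,...,Xₙ⟩/I` of the free algebra by a two-sided ideal `I`. -/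
abbrev QuotAlg {R : Type} [CommRing R] {n : ℕ} (I : TwoSidedIdeal (FreeAlg R n)) : Type :=
  RingQuot (fun a b : FreeAlg R n => a - b ∈ I)

/-- The canonical projection `R⟨X₁,...,Xₙ⟩ → A = R⟨X⟩/I`. -/
noncomputable def quotProj {R : Type} [CommRing R] {n : ℕ}
    (I : TwoSidedIdeal (FreeAlg R n)) : FreeAlg R n →+* QuotAlg I :=
  RingQuot.mkRingHom (fun a b : FreeAlg R n => a - b ∈ I)

/-- The `D`-subalgebra `Λ = (D⟨X⟩ + I)/I` of `A = R⟨X⟩/I`: the image of `D⟨X⟩` in `A`. -/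
noncomputable def Lam {R : Type} [CommRing R] {n : ℕ} (D : Subring R)
    (I : TwoSidedIdeal (FreeAlg R n)) : Subring (QuotAlg I) :=
  ((quotProj I).comp (coeffIncl ↥D R n).toRingHom).range

/-- The canonical structure map `D → Λ`, `d ↦ class of the constant d`. -/
noncomputable def LamStruct {R : Type} [CommRing R] {n : ℕ} (D : Subring R)
    (I : TwoSidedIdeal (FreeAlg R n)) : ↥D →+* ↥(Lam D I) :=
  (((quotProj I).comp (coeffIncl ↥D R n).toRingHom).rangeRestrict).comp
    MonoidAlgebra.singleOneRingHom

/-- The quotient `Λ/ωΛ` of `Λ` by the (two-sided) ideal generated by the image of `ω`. -/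
abbrev LamQuot {R : Type} [CommRing R] {n : ℕ} (D : Subring R) (ω : Ideal ↥D)
    (I : TwoSidedIdeal (FreeAlg R n)) : Type :=
  RingQuot (fun a b : ↥(Lam D I) => (∃ d ∈ ω, a = LamStruct D I d) ∧ b = 0)

section AuxOrder

variable {n : ℕ} (o : MonomialOrdering n)

lemma MonomialOrdering.lt_trans'' {a b c : Word n} (h1 : o.lt a b) (h2 : o.lt b c) :
    o.lt a c := by
  haveI := o.strictTotal
  exact _root_.trans h1 h2

lemma MonomialOrdering.lt_irrefl'' (a : Word n) : ¬ o.lt a a := by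
  haveI := o.strictTotal
  exact irrefl_of o.lt a

lemma MonomialOrdering.trichot (a b : Word n) : o.lt a b ∨ a = b ∨ o.lt b a := by
  haveI := o.strictTotal
  exact trichotomous_of o.lt a b

lemma MonomialOrdering.le_antisymm'' {a b : Word n} (h1 : o.le a b) (h2 : o.le b a) :
    a = b := by
  rcases h1 with rfl | h1
  · rfl
  rcases h2 with rfl | h2
  · rfl
  exact absurd (o.lt_trans'' h1 h2) (o.lt_irrefl'' a)

lemma MonomialOrdering.lt_of_le_of_ne'' {a b : Word n} (h1 : o.le a b) (h2 : a ≠ b) :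
    o.lt a b := by
  rcases h1 with rfl | h
  · exact absurd rfl h2
  · exact h

lemma MonomialOrdering.exists_max (s : Finset (Word n)) (hs : s.Nonempty) :
    ∃ w ∈ s, ∀ u ∈ s, o.le u w := by
  classical
  induction s using Finset.induction_on with
  | empty => exact absurd hs (by simp)
  | @insert a s ha ih =>
    by_cases hs' : s.Nonempty
    · obtain ⟨w, hw, hmax⟩ := ih hs'
      rcases o.trichot a w with h | h | h
      · refine ⟨w, Finset.mem_insert_of_mem hw, ?_⟩
        intro u hu
        rcases Finset.mem_insert.mp hu with rfl | hu
        · exact Or.inr h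
        · exact hmax u hu
      · subst h
        refine ⟨a, Finset.mem_insert_self a s, ?_⟩
        intro u hu
        rcases Finset.mem_insert.mp hu with rfl | hu
        · exact Or.inl rfl
        · exact hmax u hu
      · refine ⟨a, Finset.mem_insert_self a s, ?_⟩
        intro u hu
        rcases Finset.mem_insert.mp hu with rfl | hu
        · exact Or.inl rfl
        · rcases hmax u hu with rfl | h'
          · exact Or.inr h
          · exact Or.inr (o.lt_trans'' h' h)
    · rw [Finset.not_nonempty_iff_eq_empty] at hs'
      subst hs'
      refine ⟨a, Finset.mem_insert_self a ∅, ?_⟩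
      intro u hu
      rcases Finset.mem_insert.mp hu with rfl | hu
      · exact Or.inl rfl
      · exact absurd hu (by simp)

end AuxOrder

section AuxLM

variable {n : ℕ} (o : MonomialOrdering n) {R : Type} [CommRing R]

lemma LM_spec (f : FreeAlg R n) (hf : f ≠ 0) :
    LM o f ∈ f.coeff.support ∧ ∀ u ∈ f.coeff.support, o.le u (LM o f) := by
  have h : ∃ w, w ∈ f.coeff.support ∧ ∀ u ∈ f.coeff.support, o.le u w :=
    o.exists_max f.coeff.support (Finsupp.support_nonempty_iff.mpr
      (fun h0 => hf (MonoidAlgebra.coeff_injective (h0.trans MonoidAlgebra.coeff_zero.symm))))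
  rw [LM, dif_pos h]
  exact h.choose_spec

lemma LM_eq_of_max {f : FreeAlg R n} {w : Word n} (hw : w ∈ f.coeff.support)
    (hmax : ∀ u ∈ f.coeff.support, o.le u w) : LM o f = w := by
  have hf : f ≠ 0 := by
    rintro rfl
    simp at hw
  obtain ⟨hm, hmx⟩ := LM_spec o f hf
  exact o.le_antisymm'' (hmax _ hm) (hmx _ hw)

lemma LM_eq_of_support_eq {S : Type} [CommRing S] {f : FreeAlg R n} {g : FreeAlg S n}
    (h : f.coeff.support = g.coeff.support) : LM o f = LM o g := by
  unfold LM
  rw [h]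

end AuxLM
section AuxCoeff

variable {n : ℕ} (S : Type) [CommRing S] (T : Type) [CommRing T] [Algebra S T]

lemma coeffIncl_single (u : Word n) (d : S) :
    coeffIncl S T n (MonoidAlgebra.single u d) = MonoidAlgebra.single u (algebraMap S T d) := by
  rw [coeffIncl, MonoidAlgebra.lift_single, MonoidAlgebra.of_apply]
  rw [MonoidAlgebra.smul_single, Algebra.algebraMap_eq_smul_one]

lemma coeffIncl_apply (f : FreeAlg S n) (w : Word n) :
    (coeffIncl S T n f).coeff w = algebraMap S T (f.coeff w) := by
  induction f using MonoidAlgebra.induction_linear with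
  | zero => simp
  | add f g hf hg =>
      rw [map_add, MonoidAlgebra.coeff_add, MonoidAlgebra.coeff_add, Finsupp.add_apply,
        Finsupp.add_apply, hf, hg, map_add]
  | single u d =>
      rw [coeffIncl_single, MonoidAlgebra.coeff_single, MonoidAlgebra.coeff_single]
      rcases eq_or_ne u w with rfl | hne
      · rw [Finsupp.single_eq_same, Finsupp.single_eq_same]
      · rw [Finsupp.single_eq_of_ne' hne, Finsupp.single_eq_of_ne' hne, map_zero]

lemma coeffIncl_support (hinj : Function.Injective (algebraMap S T)) (f : FreeAlg S n) :
    (coeffIncl S T n f).coeff.support = f.coeff.support := by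
  ext w
  simp only [Finsupp.mem_support_iff, coeffIncl_apply]
  constructor
  · intro h h0
    rw [h0, map_zero] at h
    exact h rfl
  · intro h h0
    exact h (hinj (by rw [h0, map_zero]))

lemma coeffIncl_injective (hinj : Function.Injective (algebraMap S T)) :
    Function.Injective (coeffIncl S T n) := by
  intro f g h
  ext w
  apply hinj
  rw [← coeffIncl_apply, ← coeffIncl_apply, h]

lemma coeffIncl_surjective (hsurj : Function.Surjective (algebraMap S T)) :
    Function.Surjective (coeffIncl S T n) := by
  intro F
  induction F using MonoidAlgebra.induction_linear with
  | zero => exact ⟨0, map_zero _⟩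
  | add f g hf hg =>
      obtain ⟨f', rfl⟩ := hf
      obtain ⟨g', rfl⟩ := hg
      exact ⟨f' + g', map_add _ _ _⟩
  | single u c =>
      obtain ⟨d, rfl⟩ := hsurj c
      exact ⟨MonoidAlgebra.single u d, coeffIncl_single S T u d⟩

end AuxCoeff

section AuxMono

variable {n : ℕ} {R : Type} [CommRing R]

lemma wordConj_injective (u v : Word n) : Function.Injective (fun x : Word n => u * x * v) := by
  intro x y h
  simp only at h
  exact mul_left_cancel (mul_right_cancel h)

lemma mono_mul_mul (u v : Word n) (g : FreeAlg R n) :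
    mono R u * g * mono R v = MonoidAlgebra.mapDomain (fun x => u * x * v) g := by
  induction g using MonoidAlgebra.induction_linear with
  | zero => simp
  | add f g hf hg => rw [mul_add, add_mul, hf, hg, MonoidAlgebra.mapDomain_add]
  | single x c =>
      rw [MonoidAlgebra.mapDomain_single, mono]
      show MonoidAlgebra.single u 1 * MonoidAlgebra.single x c * MonoidAlgebra.single v 1
        = MonoidAlgebra.single (u * x * v) c
      rw [MonoidAlgebra.single_mul_single, MonoidAlgebra.single_mul_single, one_mul, mul_one]

lemma mono_mul_support (u v : Word n) (g : FreeAlg R n) :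
    (mono R u * g * mono R v).coeff.support = g.coeff.support.image (fun x => u * x * v) := by
  classical
  rw [mono_mul_mul]
  exact Finsupp.mapDomain_support_of_injective (wordConj_injective u v) g.coeff

lemma mono_mul_apply (u v : Word n) (g : FreeAlg R n) (x : Word n) :
    (mono R u * g * mono R v).coeff (u * x * v) = g.coeff x := by
  rw [mono_mul_mul]
  exact Finsupp.mapDomain_apply (wordConj_injective u v) g.coeff x

lemma LM_conj (o : MonomialOrdering n) (u v : Word n) {g : FreeAlg R n} (hg : g ≠ 0) :
    LM o (mono R u * g * mono R v) = u * LM o g * v := by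
  obtain ⟨hmem, hmax⟩ := LM_spec o g hg
  apply LM_eq_of_max
  · rw [mono_mul_support]
    exact Finset.mem_image_of_mem _ hmem
  · intro w hw
    rw [mono_mul_support] at hw
    obtain ⟨x, hx, rfl⟩ := Finset.mem_image.mp hw
    rcases hmax x hx with rfl | h
    · exact Or.inl rfl
    · exact Or.inr (o.mul_compat u x (LM o g) v h)

end AuxMono
section AuxKey

lemma subring_algebraMap_injective {R : Type} [CommRing R] (D : Subring R) :
    Function.Injective (algebraMap ↥D R) := by
  intro a b h
  exact Subtype.ext h

theorem mem_span_of_incl_mem {R : Type} [CommRing R] {n : ℕ} (o : MonomialOrdering n)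
    (D : Subring R) (G : Set (FreeAlg ↥D n)) (I : TwoSidedIdeal (FreeAlg R n))
    (hGI : ∀ g ∈ ⇑(coeffIncl ↥D R n) '' G, g ∈ I)
    (hmonic : IsMonicSet o (⇑(coeffIncl ↥D R n) '' G))
    (hdvd : ∀ f : FreeAlg R n, f ∈ I → f ≠ 0 →
      ∃ g ∈ ⇑(coeffIncl ↥D R n) '' G, WordDvd (LM o g) (LM o f))
    (f : FreeAlg ↥D n) (hf : coeffIncl ↥D R n f ∈ I) :
    f ∈ TwoSidedIdeal.span G := by
  have hinj := subring_algebraMap_injective D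
  have key : ∀ m : Word n, ∀ f : FreeAlg ↥D n, coeffIncl ↥D R n f ∈ I → LM o f = m →
      f ∈ TwoSidedIdeal.span G := by
    intro m
    refine o.wellFounded.induction
      (C := fun m => ∀ f : FreeAlg ↥D n, coeffIncl ↥D R n f ∈ I → LM o f = m →
        f ∈ TwoSidedIdeal.span G) m ?_
    clear hf f m
    intro m IH f hfI hLM
    subst hLM
    by_cases hf0 : f = 0
    · subst hf0
      exact (TwoSidedIdeal.span G).zero_mem
    have hsupp := coeffIncl_support ↥D R hinj f
    have hι0 : coeffIncl ↥D R n f ≠ 0 := by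
      intro h
      exact hf0 (coeffIncl_injective ↥D R hinj (by rw [h, map_zero]))
    obtain ⟨g', ⟨g, hgG, rfl⟩, w, s, hdvd'⟩ := hdvd _ hfI hι0
    have hg0 : g ≠ 0 := by
      intro h
      exact (hmonic _ ⟨g, hgG, rfl⟩).1 (by rw [h, map_zero])
    have hsg := coeffIncl_support ↥D R hinj g
    have hLMf : LM o (coeffIncl ↥D R n f) = LM o f := LM_eq_of_support_eq o hsupp
    have hLMg : LM o (coeffIncl ↥D R n g) = LM o g := LM_eq_of_support_eq o hsg
    rw [hLMf, hLMg] at hdvd'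
    -- hdvd' : LM o f = w * LM o g * s
    have hLC : g.coeff (LM o g) = 1 := by
      have h1 := (hmonic _ ⟨g, hgG, rfl⟩).2
      rw [LC, hLMg, coeffIncl_apply] at h1
      exact hinj (by rw [h1, map_one])
    set c : ↥D := f.coeff (LM o f) with hc
    set p : FreeAlg ↥D n := mono ↥D w * g * mono ↥D s with hp
    have hpLM : LM o p = LM o f := by rw [hp, LM_conj o w s hg0, ← hdvd']
    set q : FreeAlg ↥D n := MonoidAlgebra.single 1 c * p with hq
    have hqapp : ∀ x, q.coeff x = c * p.coeff x := fun x => MonoidAlgebra.coeff_single_one_mul p c x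
    have hpspan : p ∈ TwoSidedIdeal.span G := by
      rw [hp, mul_assoc]
      exact TwoSidedIdeal.mul_mem_left _ _ _
        (TwoSidedIdeal.mul_mem_right _ _ _ (TwoSidedIdeal.subset_span hgG))
    have hqspan : q ∈ TwoSidedIdeal.span G := by
      rw [hq]
      exact TwoSidedIdeal.mul_mem_left _ _ _ hpspan
    set f' : FreeAlg ↥D n := f - q with hf'
    have hfq : f = f' + q := by rw [hf', sub_add_cancel]
    have hιp : coeffIncl ↥D R n p ∈ I := by
      rw [hp, map_mul, map_mul, mul_assoc]
      exact TwoSidedIdeal.mul_mem_left _ _ _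
        (TwoSidedIdeal.mul_mem_right _ _ _ (hGI _ ⟨g, hgG, rfl⟩))
    have hιq : coeffIncl ↥D R n q ∈ I := by
      rw [hq, map_mul]
      exact TwoSidedIdeal.mul_mem_left _ _ _ hιp
    have hιf' : coeffIncl ↥D R n f' ∈ I := by
      rw [hf', map_sub]
      exact TwoSidedIdeal.sub_mem _ hfI hιq
    have hpLMf : p.coeff (LM o f) = 1 := by
      rw [hdvd', hp, mono_mul_apply, hLC]
    have hf'LMf : f'.coeff (LM o f) = 0 := by
      rw [hf', MonoidAlgebra.coeff_sub, Finsupp.sub_apply, hqapp, hpLMf, mul_one, ← hc, sub_self]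
    have hlt : ∀ x ∈ f'.coeff.support, o.lt x (LM o f) := by
      intro x hx
      have hxne : x ≠ LM o f := by
        rintro rfl
        rw [Finsupp.mem_support_iff] at hx
        exact hx hf'LMf
      have hx' : x ∈ f.coeff.support ∨ x ∈ p.coeff.support := by
        by_contra hcon
        push_neg at hcon
        rw [Finsupp.mem_support_iff, hf', MonoidAlgebra.coeff_sub, Finsupp.sub_apply, hqapp,
          Finsupp.notMem_support_iff.mp hcon.1,
          Finsupp.notMem_support_iff.mp hcon.2, mul_zero, sub_zero] at hx
        exact hx rfl
      rcases hx' with hx' | hx'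
      · exact o.lt_of_le_of_ne'' ((LM_spec o f hf0).2 x hx') hxne
      · rw [hp, mono_mul_support] at hx'
        obtain ⟨y, hy, rfl⟩ := Finset.mem_image.mp hx'
        have hyne : y ≠ LM o g := by
          rintro rfl
          exact hxne hdvd'.symm
        rw [hdvd']
        exact o.mul_compat w y (LM o g) s
          (o.lt_of_le_of_ne'' ((LM_spec o g hg0).2 y hy) hyne)
    by_cases hf'0 : f' = 0
    · rw [hfq, hf'0, zero_add]
      exact hqspan
    · have hLMf' : o.lt (LM o f') (LM o f) := hlt _ (LM_spec o f' hf'0).1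
      have hmem := IH (LM o f') hLMf' f' hιf' rfl
      rw [hfq]
      exact TwoSidedIdeal.add_mem _ hmem hqspan
  exact key (LM o f) f hf rfl

end AuxKey

set_option maxHeartbeats 1000000

/-- **Theorem 5.2 (iii).** Let `R` be a commutative ring, `D` a subring of `R` with the same
identity `1`, and `I` the ideal of `R⟨X₁,...,Xₙ⟩` generated by a subset `G ⊆ D⟨X⟩` which is
a monic Gröbner basis of `I` in `R⟨X⟩`.  Put `Λ = (D⟨X⟩ + I)/I ⊆ R⟨X⟩/I`.  Then for any
proper ideal `ω` of `D` with `G ⊄ ωD⟨X⟩`, there is an isomorphism of `k`-algebras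
`Λ/ωΛ ≅ k⟨X⟩/⟨Ḡ⟩`, where `k = D/ω` and `Ḡ` is the canonical image of `G` in
`D⟨X⟩/ωD⟨X⟩ ≅ k⟨X⟩` (the isomorphism being one of `k`-algebras is expressed by its
compatibility with the two structure maps from `D`). -/
theorem good_reduction_iso {R : Type} [CommRing R] {n : ℕ} (o : MonomialOrdering n)
    (D : Subring R) (G : Set (FreeAlg ↥D n)) (I : TwoSidedIdeal (FreeAlg R n))
    (hgen : I = TwoSidedIdeal.span (⇑(coeffIncl ↥D R n) '' G))
    (hGB : IsMonicGB o (⇑(coeffIncl ↥D R n) '' G) I)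
    (ω : Ideal ↥D) (hω : ω ≠ ⊤)
    (hGω : ¬ ∀ g ∈ G, ∀ u : Word n, g.coeff u ∈ ω) :
    ∃ e : LamQuot D ω I ≃+*
        RingQuot (fun a b : FreeAlg (↥D ⧸ ω) n =>
          a ∈ ⇑(coeffIncl ↥D (↥D ⧸ ω) n) '' G ∧ b = 0),
      ∀ d : ↥D,
        e (RingQuot.mkRingHom _ (LamStruct D I d)) =
          RingQuot.mkRingHom _
            (MonoidAlgebra.singleOneRingHom (Ideal.Quotient.mk ω d)) := by
  classical
  -- notation
  set relL : ↥(Lam D I) → ↥(Lam D I) → Prop :=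
    fun a b => (∃ d ∈ ω, a = LamStruct D I d) ∧ b = 0 with hrelL
  set relk : FreeAlg (↥D ⧸ ω) n → FreeAlg (↥D ⧸ ω) n → Prop :=
    fun a b => a ∈ ⇑(coeffIncl ↥D (↥D ⧸ ω) n) '' G ∧ b = 0 with hrelk
  let h0 : FreeAlg ↥D n →+* QuotAlg I := (quotProj I).comp (coeffIncl ↥D R n).toRingHom
  let h : FreeAlg ↥D n →+* ↥(Lam D I) := h0.rangeRestrict
  let mkL : ↥(Lam D I) →+* RingQuot relL := RingQuot.mkRingHom relL
  let mkk : FreeAlg (↥D ⧸ ω) n →+* RingQuot relk := RingQuot.mkRingHom relk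
  let φ : FreeAlg ↥D n →+* RingQuot relk := mkk.comp (coeffIncl ↥D (↥D ⧸ ω) n).toRingHom
  let π : FreeAlg ↥D n →+* RingQuot relL := mkL.comp h
  have hφ : ∀ x, φ x = mkk (coeffIncl ↥D (↥D ⧸ ω) n x) := fun _ => rfl
  have hπ : ∀ x, π x = mkL (h x) := fun _ => rfl
  -- membership in I is detected by the projection
  have hquot0 : ∀ x : FreeAlg R n, x ∈ I → quotProj I x = 0 := by
    intro x hx
    have : quotProj I x = quotProj I 0 :=
      RingQuot.mkRingHom_rel (by rw [sub_zero]; exact hx)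
    rwa [map_zero] at this
  have hquot0' : ∀ x : FreeAlg R n, quotProj I x = 0 → x ∈ I := by
    intro x hx
    let ν : QuotAlg I →+* I.ringCon.Quotient :=
      RingQuot.lift ⟨RingCon.mk' I.ringCon, by
        intro a b hab
        exact (RingCon.eq _).mpr ((TwoSidedIdeal.rel_iff I a b).mpr hab)⟩
    have h1 : ν (quotProj I x) = RingCon.mk' I.ringCon x :=
      RingQuot.lift_mkRingHom_apply _ _ x
    rw [hx, map_zero] at h1
    have h2 : I.ringCon x 0 := (RingCon.eq _).mp
      (show RingCon.mk' I.ringCon x = RingCon.mk' I.ringCon 0 by rw [← h1, map_zero])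
    have := (TwoSidedIdeal.rel_iff I x 0).mp h2
    rwa [sub_zero] at this
  -- `φ` kills the span of `G`
  have hφG : ∀ g ∈ G, φ g = 0 := by
    intro g hg
    have : mkk (coeffIncl ↥D (↥D ⧸ ω) n g) = mkk 0 :=
      RingQuot.mkRingHom_rel ⟨⟨g, hg, rfl⟩, rfl⟩
    rw [hφ, this, map_zero]
  have hφspan : ∀ x ∈ TwoSidedIdeal.span G, φ x = 0 := by
    intro x hx
    have hmem := TwoSidedIdeal.mem_span_iff.mp hx
      (TwoSidedIdeal.mk' {y | φ y = 0}
        (by show φ 0 = 0; rw [map_zero])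
        (fun {a b} ha hb => by
          show φ (a + b) = 0
          rw [map_add, ha, hb, add_zero])
        (fun {a} ha => by
          show φ (-a) = 0
          rw [map_neg, ha, neg_zero])
        (fun {a b} hb => by
          show φ (a * b) = 0
          rw [map_mul, hb, mul_zero])
        (fun {a b} ha => by
          show φ (a * b) = 0
          rw [map_mul, ha, zero_mul]))
      (fun g hg => by rw [SetLike.mem_coe, TwoSidedIdeal.mem_mk']; exact hφG g hg)
    rwa [TwoSidedIdeal.mem_mk'] at hmem
  -- kernel of `h` is contained in kernel of `φ`, via the Gröbner division
  have hkerφ : RingHom.ker h ≤ RingHom.ker φ := by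
    intro x hx
    rw [RingHom.mem_ker] at hx ⊢
    have hx0 : h0 x = 0 := by
      have := congrArg Subtype.val hx
      exact this
    have hxI : coeffIncl ↥D R n x ∈ I := hquot0' _ hx0
    exact hφspan x (mem_span_of_incl_mem o D G I hGB.1 hGB.2.1 hGB.2.2 x hxI)
  have hhsurj : Function.Surjective h := RingHom.rangeRestrict_surjective h0
  let ψ : ↥(Lam D I) →+* RingQuot relk := (h.liftOfSurjective hhsurj) ⟨φ, hkerφ⟩
  have hψh : ∀ x, ψ (h x) = φ x := fun x =>
    h.liftOfRightInverse_comp_apply _ _ ⟨φ, hkerφ⟩ x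
  -- `LamStruct` is `h` applied to a constant
  have hLS : ∀ d : ↥D, LamStruct D I d = h (MonoidAlgebra.single 1 d) := fun d => rfl
  -- `φ` on constants
  have hφconst : ∀ d : ↥D,
      φ (MonoidAlgebra.single 1 d) = mkk (MonoidAlgebra.single 1 (Ideal.Quotient.mk ω d)) := by
    intro d
    rw [hφ, coeffIncl_single, Ideal.Quotient.algebraMap_eq]
  have hψrel : ∀ ⦃a b⦄, relL a b → ψ a = ψ b := by
    rintro a b ⟨⟨d, hd, rfl⟩, rfl⟩
    rw [map_zero, hLS, hψh, hφconst, Ideal.Quotient.eq_zero_iff_mem.mpr hd]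
    rw [show (MonoidAlgebra.single (1 : Word n) (0 : ↥D ⧸ ω)) = 0 from MonoidAlgebra.single_zero 1,
      map_zero]
  let φbar : RingQuot relL →+* RingQuot relk := RingQuot.lift ⟨ψ, hψrel⟩
  have hφbar : ∀ y, φbar (mkL y) = ψ y := fun y => RingQuot.lift_mkRingHom_apply _ _ y
  -- the other direction
  have hsurjk : Function.Surjective (coeffIncl ↥D (↥D ⧸ ω) n) :=
    coeffIncl_surjective ↥D (↥D ⧸ ω) (by
      rw [Ideal.Quotient.algebraMap_eq]
      exact Ideal.Quotient.mk_surjective)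
  have hπconst : ∀ d : ↥D, d ∈ ω → π (MonoidAlgebra.single 1 d) = 0 := by
    intro d hd
    have h1 : π (MonoidAlgebra.single 1 d) = mkL (LamStruct D I d) := rfl
    have h2 : mkL (LamStruct D I d) = mkL 0 :=
      RingQuot.mkRingHom_rel ⟨⟨d, hd, rfl⟩, rfl⟩
    rw [h1, h2, map_zero]
  have hkerπ : RingHom.ker (coeffIncl ↥D (↥D ⧸ ω) n).toRingHom ≤ RingHom.ker π := by
    intro x hx
    rw [RingHom.mem_ker] at hx ⊢
    have hx' : ∀ u, x.coeff u ∈ ω := by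
      intro u
      have : (coeffIncl ↥D (↥D ⧸ ω) n x).coeff u = 0 := by
        show ((coeffIncl ↥D (↥D ⧸ ω) n).toRingHom x).coeff u = 0
        rw [hx]
        rfl
      rw [coeffIncl_apply, Ideal.Quotient.algebraMap_eq] at this
      exact Ideal.Quotient.eq_zero_iff_mem.mp this
    conv_lhs => rw [← MonoidAlgebra.sum_coeff_single x]
    rw [map_finsuppSum]
    apply Finset.sum_eq_zero
    intro u _
    show π (MonoidAlgebra.single u (x.coeff u)) = 0
    have hsplit : (MonoidAlgebra.single u (x.coeff u) : FreeAlg ↥D n)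
        = MonoidAlgebra.single u 1 * MonoidAlgebra.single 1 (x.coeff u) := by
      rw [MonoidAlgebra.single_mul_single, mul_one, one_mul]
    rw [hsplit, map_mul, hπconst (x.coeff u) (hx' u), mul_zero]
  let θ : FreeAlg (↥D ⧸ ω) n →+* RingQuot relL :=
    ((coeffIncl ↥D (↥D ⧸ ω) n).toRingHom.liftOfSurjective hsurjk) ⟨π, hkerπ⟩
  have hθ : ∀ x, θ (coeffIncl ↥D (↥D ⧸ ω) n x) = π x := fun x =>
    (coeffIncl ↥D (↥D ⧸ ω) n).toRingHom.liftOfRightInverse_comp_apply _ _ ⟨π, hkerπ⟩ x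
  have hθrel : ∀ ⦃a b⦄, relk a b → θ a = θ b := by
    rintro a b ⟨⟨g, hg, rfl⟩, rfl⟩
    rw [map_zero, hθ, hπ]
    have hgI : coeffIncl ↥D R n g ∈ I := hGB.1 _ ⟨g, hg, rfl⟩
    have hh0 : h g = 0 := Subtype.ext (by
      show h0 g = 0
      exact hquot0 _ hgI)
    rw [hh0, map_zero]
  let χ : RingQuot relk →+* RingQuot relL := RingQuot.lift ⟨θ, hθrel⟩
  have hχ : ∀ y, χ (mkk y) = θ y := fun y => RingQuot.lift_mkRingHom_apply _ _ y
  -- the two compositions are the identity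
  have hπsurj : Function.Surjective π :=
    (RingQuot.mkRingHom_surjective relL).comp hhsurj
  have inv1 : χ.comp φbar = RingHom.id (RingQuot relL) := by
    apply RingHom.ext
    intro z
    obtain ⟨x, rfl⟩ := hπsurj z
    rw [RingHom.comp_apply, RingHom.id_apply, hπ, hφbar, hψh, hφ, hχ, hθ, hπ]
  have inv2 : φbar.comp χ = RingHom.id (RingQuot relk) := by
    apply RingHom.ext
    intro z
    obtain ⟨F, rfl⟩ := RingQuot.mkRingHom_surjective relk z
    obtain ⟨x, rfl⟩ := hsurjk F
    rw [RingHom.comp_apply, RingHom.id_apply]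
    show φbar (χ (mkk (coeffIncl ↥D (↥D ⧸ ω) n x))) = mkk (coeffIncl ↥D (↥D ⧸ ω) n x)
    rw [hχ, hθ, hπ, hφbar, hψh, hφ]
  refine ⟨RingEquiv.ofRingHom φbar χ inv2 inv1, ?_⟩
  intro d
  show φbar (mkL (LamStruct D I d)) = _
  rw [hφbar, hLS, hψh, hφconst]
  rfl
end

section
/- Let A be a Γ-filtered ring with an exhaustive and separated Γ-filtration FA such that 1 ∈ F₀A − F_{<0}A, where Γ is a totally ordered abelian additive group, and suppose the associated graded ring G(A) is a domain (hence A is a domain) and that A is an Ore domain with (skew-)field of fractions Δ. Then the valuation v(a) = −d(a) on A extends uniquely to a valuation on Δ, subject to v(ab⁻¹) = v(a) − v(b) for a, b ∈ A with b ≠ 0. -/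
/-- Axioms (V1)–(V3) for a valuation function on a ring `A` with values in
`Γ ∪ {∞}`, realized as `WithTop Γ`: `v a = ∞` iff `a = 0`; `v (ab) = v a + v b`;
`v (a+b) ≥ min (v a) (v b)`. -/
def IsValuationFn {A : Type} [Ring A] {Γ : Type} [AddCommGroup Γ] [LinearOrder Γ] [IsOrderedAddMonoid Γ]
    (v : A → WithTop Γ) : Prop :=
  (∀ a : A, v a = ⊤ ↔ a = 0) ∧ (∀ a b : A, v (a * b) = v a + v b) ∧
    ∀ a b : A, min (v a) (v b) ≤ v (a + b)

/-- A valuation of a ring `A` (in the sense of O. Schilling): a surjective function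
`v : A → Γ ∪ {∞}` satisfying (V1)–(V3). -/
def IsValuation {A : Type} [Ring A] {Γ : Type} [AddCommGroup Γ] [LinearOrder Γ] [IsOrderedAddMonoid Γ]
    (v : A → WithTop Γ) : Prop :=
  Function.Surjective v ∧ IsValuationFn v

/-- The exhaustive `Γ`-filtration `F^v_γA = {a ∈ A : v a ≥ -γ}` determined by a
valuation `v`. -/
def valFiltration {A : Type} [Ring A] {Γ : Type} [AddCommGroup Γ] [LinearOrder Γ] [IsOrderedAddMonoid Γ]
    (v : A → WithTop Γ) (γ : Γ) : Set A :=
  {a : A | ((-γ : Γ) : WithTop Γ) ≤ v a}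

/-- The statement that the associated `Γ`-graded ring `G(A) = ⊕_γ F_γA/F_{<γ}A` of a
`Γ`-filtration on `A` is a domain.  Since `Γ` is a totally ordered group, `G(A)` is a domain
iff the product of any two nonzero homogeneous elements is nonzero; this is expressed here at
the level of the filtration: whenever `a` represents a nonzero class of `F_γA/F_{<γ}A` and
`b` a nonzero class of `F_τA/F_{<τ}A`, the product `a*b` represents a nonzero class of
`F_{γ+τ}A/F_{<γ+τ}A`. -/
def AssociatedGradedIsDomain {A : Type} [Ring A] {Γ : Type} [AddCommGroup Γ] [LinearOrder Γ] [IsOrderedAddMonoid Γ]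
    (F : Γ → Set A) : Prop :=
  ∀ (γ τ : Γ) (a b : A), a ∈ F γ → (∀ γ' < γ, a ∉ F γ') → b ∈ F τ → (∀ τ' < τ, b ∉ F τ') →
    (a * b ∈ F (γ + τ) ∧ ∀ ρ < γ + τ, a * b ∉ F ρ)

/-- An exhaustive `Γ`-filtration on a ring `S`: a family of additive subgroups `F γ` of `S`
with (F1) `S = ∪_γ F γ`, (F2) `F γ₁ ⊆ F γ₂` for `γ₁ < γ₂`, (F3) `F γ · F τ ⊆ F (γ+τ)`,
(F4) `1 ∈ F 0`. -/
structure RingFiltration (Γ : Type) [AddMonoid Γ] [LinearOrder Γ] (S : Type) [Ring S] where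
  F : Γ → AddSubgroup S
  exhaustive : ∀ s : S, ∃ γ : Γ, s ∈ F γ
  mono : ∀ ⦃γ₁ γ₂ : Γ⦄, γ₁ < γ₂ → F γ₁ ≤ F γ₂
  mul_mem : ∀ ⦃γ τ : Γ⦄ ⦃a b : S⦄, a ∈ F γ → b ∈ F τ → a * b ∈ F (γ + τ)
  one_mem : 1 ∈ F 0

/-- **Theorem 6.2 (ii).**  Let `A` be a ring with an exhaustive and separated `Γ`-filtration
`FA` such that `1 ∈ F₀A − F_{<0}A`, suppose the associated graded ring `G(A)` is a domain
(hence `A` is a domain), and let `v(a) = -d(a)` be the induced valuation on `A`.  If `A` is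
an Ore domain with (skew-)field of fractions `Δ` (every element of `Δ` is of the form
`a·b⁻¹` with `a, b ∈ A`, `b ≠ 0`), then `v` extends in a unique way to a valuation
function `w` on `Δ`, subject to the rule `w(a·b⁻¹) = v(a) - v(b)` (expressed here
additively as `w(a·b⁻¹) + v(b) = v(a)`). -/
theorem valuation_extends_to_skewfield {A : Type} [Ring A] {Γ : Type}
    [AddCommGroup Γ] [LinearOrder Γ] [IsOrderedAddMonoid Γ] (FA : RingFiltration Γ A)
    (hsep : ∀ a : A, a ≠ 0 → ∃ γ : Γ, a ∈ FA.F γ ∧ ∀ γ' < γ, a ∉ FA.F γ')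
    (h1 : (1 : A) ∈ FA.F 0 ∧ ∀ γ' < (0 : Γ), (1 : A) ∉ FA.F γ')
    (hdom : AssociatedGradedIsDomain (fun γ => (FA.F γ : Set A)))
    (v : A → WithTop Γ) (hv0 : v 0 = ⊤)
    (hvd : ∀ a : A, a ≠ 0 → ∀ γ : Γ, a ∈ FA.F γ → (∀ γ' < γ, a ∉ FA.F γ') →
      v a = ((-γ : Γ) : WithTop Γ))
    (Δ : Type) [DivisionRing Δ] (ι : A →+* Δ) (hinj : Function.Injective ι)
    (hfrac : ∀ x : Δ, ∃ a b : A, b ≠ 0 ∧ x = ι a * (ι b)⁻¹) :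
    ∃! w : Δ → WithTop Γ, IsValuationFn w ∧ (∀ a : A, w (ι a) = v a) ∧
      ∀ a b : A, b ≠ 0 → w (ι a * (ι b)⁻¹) + v b = v a := by

  classical
  -- basic consequences
  have hιne : ∀ a : A, a ≠ 0 → ι a ≠ 0 := fun a ha h => ha (hinj (by rw [h, map_zero]))
  have h10 : (1 : A) ≠ 0 := by
    intro h
    have : (1 : Δ) = 0 := by rw [← map_one ι, h, map_zero]
    exact one_ne_zero this
  have hmul0 : ∀ a b : A, a ≠ 0 → b ≠ 0 → a * b ≠ 0 := by
    intro a b ha hb hab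
    have : ι a * ι b = 0 := by rw [← map_mul, hab, map_zero]
    rcases mul_eq_zero.mp this with h | h
    · exact hιne a ha h
    · exact hιne b hb h
  have hvtop : ∀ a : A, v a = ⊤ ↔ a = 0 := by
    intro a
    constructor
    · intro h
      by_contra ha
      obtain ⟨γ, hγ, hγ'⟩ := hsep a ha
      rw [hvd a ha γ hγ hγ'] at h
      exact WithTop.coe_ne_top h
    · rintro rfl; exact hv0
  have hvne : ∀ a : A, a ≠ 0 → v a ≠ ⊤ := fun a ha h => ha ((hvtop a).mp h)
  have hv1 : v 1 = 0 := by
    rw [hvd 1 h10 0 h1.1 h1.2, neg_zero, WithTop.coe_zero]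
  have hvmul : ∀ a b : A, v (a * b) = v a + v b := by
    intro a b
    by_cases ha : a = 0
    · rw [ha, zero_mul, hv0, top_add]
    by_cases hb : b = 0
    · rw [hb, mul_zero, hv0, add_top]
    obtain ⟨γ, hγ, hγ'⟩ := hsep a ha
    obtain ⟨τ, hτ, hτ'⟩ := hsep b hb
    obtain ⟨hm, hm'⟩ := hdom γ τ a b hγ hγ' hτ hτ'
    rw [hvd a ha γ hγ hγ', hvd b hb τ hτ hτ', hvd (a*b) (hmul0 a b ha hb) (γ+τ) hm hm',
      neg_add, WithTop.coe_add]
  have hmono' : ∀ ⦃γ₁ γ₂ : Γ⦄, γ₁ ≤ γ₂ → FA.F γ₁ ≤ FA.F γ₂ := by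
    intro γ₁ γ₂ h
    rcases h.lt_or_eq with h | h
    · exact FA.mono h
    · rw [h]
  have hvadd : ∀ a b : A, min (v a) (v b) ≤ v (a + b) := by
    intro a b
    by_cases ha : a = 0
    · rw [ha, zero_add, hv0]
      exact min_le_right _ _
    by_cases hb : b = 0
    · rw [hb, add_zero, hv0]
      exact min_le_left _ _
    by_cases hab : a + b = 0
    · rw [hab, hv0]
      exact le_top
    obtain ⟨γ, hγ, hγ'⟩ := hsep a ha
    obtain ⟨τ, hτ, hτ'⟩ := hsep b hb
    obtain ⟨ρ, hρ, hρ'⟩ := hsep _ hab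
    rw [hvd a ha γ hγ hγ', hvd b hb τ hτ hτ', hvd _ hab ρ hρ hρ']
    have hmem : a + b ∈ FA.F (max γ τ) :=
      AddSubgroup.add_mem _ (hmono' (le_max_left γ τ) hγ) (hmono' (le_max_right γ τ) hτ)
    have hρm : ρ ≤ max γ τ := by
      by_contra hlt
      push_neg at hlt
      exact hρ' (max γ τ) hlt hmem
    rcases le_total γ τ with h | h
    · have h2 : ρ ≤ τ := by rwa [max_eq_right h] at hρm
      refine le_trans (min_le_right _ _) ?_
      exact_mod_cast neg_le_neg h2
    · have h2 : ρ ≤ γ := by rwa [max_eq_left h] at hρm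
      refine le_trans (min_le_left _ _) ?_
      exact_mod_cast neg_le_neg h2
  -- Ore condition
  have hore : ∀ b d : A, b ≠ 0 → d ≠ 0 → ∃ p q : A, q ≠ 0 ∧ p ≠ 0 ∧ b * q = d * p := by
    intro b d hb hd
    obtain ⟨p, q, hq, heq⟩ := hfrac ((ι d)⁻¹ * ι b)
    have hbq : b * q = d * p := by
      apply hinj
      rw [map_mul, map_mul]
      calc ι b * ι q = ι d * ((ι d)⁻¹ * ι b) * ι q := by
            rw [mul_inv_cancel_left₀ (hιne d hd)]
        _ = ι d * (ι p * (ι q)⁻¹) * ι q := by rw [heq]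
        _ = ι d * ι p := by
            rw [mul_assoc, mul_assoc, inv_mul_cancel₀ (hιne q hq), mul_one]
    have hp : p ≠ 0 := by
      intro h
      exact hmul0 b q hb hq (by rw [hbq, h, mul_zero])
    exact ⟨p, q, hq, hp, hbq⟩
  -- well-definedness of the extension
  have hwd : ∀ a b c d : A, b ≠ 0 → d ≠ 0 → ι a * (ι b)⁻¹ = ι c * (ι d)⁻¹ →
      v a + v d = v c + v b := by
    intro a b c d hb hd heq
    obtain ⟨p, q, hq, hp, hbq⟩ := hore b d hb hd
    have h1 : ι b * ι q = ι d * ι p := by rw [← map_mul, ← map_mul, hbq]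
    have haq : a * q = c * p := by
      apply hinj
      rw [map_mul, map_mul]
      calc ι a * ι q = (ι a * (ι b)⁻¹) * (ι b * ι q) := by
            rw [mul_assoc, inv_mul_cancel_left₀ (hιne b hb)]
        _ = (ι c * (ι d)⁻¹) * (ι d * ι p) := by rw [heq, h1]
        _ = ι c * ι p := by rw [mul_assoc, inv_mul_cancel_left₀ (hιne d hd)]
    have e1 : v a + v q = v c + v p := by rw [← hvmul, ← hvmul, haq]
    have e2 : v b + v q = v d + v p := by rw [← hvmul, ← hvmul, hbq]
    have hS : v q + v p ≠ ⊤ := WithTop.add_ne_top.mpr ⟨hvne q hq, hvne p hp⟩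
    apply WithTop.add_right_cancel hS
    calc v a + v d + (v q + v p) = (v a + v q) + (v d + v p) := by abel
      _ = (v c + v p) + (v b + v q) := by rw [e1, ← e2]
      _ = v c + v b + (v q + v p) := by abel
  -- the extension
  choose ra rb hrb hre using hfrac
  set gv : A → Γ := fun a => (v a).untopD 0 with hgvdef
  have hgv : ∀ a : A, a ≠ 0 → v a = ((gv a : Γ) : WithTop Γ) := by
    intro a ha
    show v a = (((v a).untopD 0 : Γ) : WithTop Γ)
    obtain ⟨γ, hγ⟩ := WithTop.ne_top_iff_exists.mp (hvne a ha)
    rw [← hγ, WithTop.untopD_coe]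
  set w : Δ → WithTop Γ := fun x => if x = 0 then ⊤ else ((gv (ra x) - gv (rb x) : Γ) : WithTop Γ)
    with hwdef
  have hw0 : w 0 = ⊤ := if_pos rfl
  have hwx : ∀ x : Δ, x ≠ 0 → w x = ((gv (ra x) - gv (rb x) : Γ) : WithTop Γ) :=
    fun x hx => if_neg hx
  -- key characterization
  have hw : ∀ (x : Δ) (a b : A), b ≠ 0 → x = ι a * (ι b)⁻¹ → w x + v b = v a := by
    intro x a b hb hxe
    by_cases ha : a = 0
    · have hx0 : x = 0 := by rw [hxe, ha, map_zero, zero_mul]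
      rw [hx0, hw0, top_add, ha, hv0]
    · have hx : x ≠ 0 := by
        rw [hxe]
        exact mul_ne_zero (hιne a ha) (inv_ne_zero (hιne b hb))
      have ha0 : ra x ≠ 0 := by
        intro h
        apply hx
        rw [hre x, h, map_zero, zero_mul]
      have key := hwd (ra x) (rb x) a b (hrb x) hb ((hre x).symm.trans hxe)
      rw [hgv _ ha0, hgv b hb, hgv a ha, hgv _ (hrb x), ← WithTop.coe_add,
        ← WithTop.coe_add, WithTop.coe_inj] at key
      rw [hwx x hx, hgv b hb, hgv a ha, ← WithTop.coe_add, WithTop.coe_inj,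
        sub_add_eq_add_sub, key, add_sub_cancel_right]
  have hwι : ∀ a : A, w (ι a) = v a := by
    intro a
    have := hw (ι a) a 1 h10 (by rw [map_one, inv_one, mul_one])
    rwa [hv1, add_zero] at this
  have hwtop : ∀ x : Δ, w x = ⊤ ↔ x = 0 := by
    intro x
    constructor
    · intro h
      by_contra hx
      rw [hwx x hx] at h
      exact WithTop.coe_ne_top h
    · rintro rfl; exact hw0
  have hwne : ∀ x : Δ, x ≠ 0 → w x ≠ ⊤ := fun x hx h => hx ((hwtop x).mp h)
  -- multiplicativity
  have hwmul : ∀ x y : Δ, w (x * y) = w x + w y := by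
    intro x y
    by_cases hx : x = 0
    · rw [hx, zero_mul, hw0, top_add]
    by_cases hy : y = 0
    · rw [hy, mul_zero, hw0, add_top]
    set a := ra x with hadef
    set b := rb x with hbdef
    set c := ra y with hcdef
    set d := rb y with hddef
    have hb : b ≠ 0 := hrb x
    have hd : d ≠ 0 := hrb y
    have hxe : x = ι a * (ι b)⁻¹ := hre x
    have hye : y = ι c * (ι d)⁻¹ := hre y
    have hc : c ≠ 0 := by
      intro h
      apply hy
      rw [hye, h, map_zero, zero_mul]
    obtain ⟨p, q, hq, hp, hcq⟩ := hore c b hc hb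
    have hc' : ι c = ι b * ι p * (ι q)⁻¹ := by
      rw [eq_mul_inv_iff_mul_eq₀ (hιne q hq), ← map_mul, ← map_mul, hcq]
    have hxy : x * y = ι (a * p) * (ι (d * q))⁻¹ := by
      rw [hxe, hye, hc', map_mul ι a p, map_mul ι d q, mul_inv_rev]
      simp only [mul_assoc]
      rw [inv_mul_cancel_left₀ (hιne b hb)]
    have e1 := hw (x * y) (a * p) (d * q) (hmul0 d q hd hq) hxy
    have e2 := hw x a b hb hxe
    have e3 := hw y c d hd hye
    have e4 : v c + v q = v b + v p := by rw [← hvmul, ← hvmul, hcq]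
    rw [hvmul d q, hvmul a p] at e1
    have hS : v b + (v d + v q) ≠ ⊤ :=
      WithTop.add_ne_top.mpr ⟨hvne b hb, WithTop.add_ne_top.mpr ⟨hvne d hd, hvne q hq⟩⟩
    apply WithTop.add_right_cancel hS
    calc w (x * y) + (v b + (v d + v q)) = (w (x * y) + (v d + v q)) + v b := by abel
      _ = (v a + v p) + v b := by rw [e1]
      _ = v a + (v c + v q) := by rw [e4]; abel
      _ = (v a + v c) + v q := by abel
      _ = ((w x + v b) + (w y + v d)) + v q := by rw [e2, e3]
      _ = (w x + w y) + (v b + (v d + v q)) := by abel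
  -- additivity
  have hwadd : ∀ x y : Δ, min (w x) (w y) ≤ w (x + y) := by
    intro x y
    by_cases hx : x = 0
    · rw [hx, zero_add, hw0]
      exact min_le_right _ _
    by_cases hy : y = 0
    · rw [hy, add_zero, hw0]
      exact min_le_left _ _
    set a := ra x with hadef
    set b := rb x with hbdef
    set c := ra y with hcdef
    set d := rb y with hddef
    have hb : b ≠ 0 := hrb x
    have hd : d ≠ 0 := hrb y
    have hxe : x = ι a * (ι b)⁻¹ := hre x
    have hye : y = ι c * (ι d)⁻¹ := hre y
    obtain ⟨p, q, hq, hp, hbq⟩ := hore b d hb hd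
    have hxe' : x = ι (a * q) * (ι (b * q))⁻¹ := by
      rw [hxe, map_mul, map_mul, mul_inv_rev]
      rw [mul_assoc, ← mul_assoc (ι q), mul_inv_cancel₀ (hιne q hq), one_mul]
    have hye' : y = ι (c * p) * (ι (b * q))⁻¹ := by
      rw [hbq, hye, map_mul, map_mul, mul_inv_rev]
      rw [mul_assoc, ← mul_assoc (ι p), mul_inv_cancel₀ (hιne p hp), one_mul]
    have hsum : x + y = ι (a * q + c * p) * (ι (b * q))⁻¹ := by
      rw [hxe', hye', map_add, add_mul]
    have hbq0 : b * q ≠ 0 := hmul0 b q hb hq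
    have e1 := hw (x + y) (a * q + c * p) (b * q) hbq0 hsum
    have e2 := hw x a b hb hxe
    have e3 := hw y c d hd hye
    have f1 : w x + v (b * q) = v (a * q) := by
      rw [hvmul b q, hvmul a q, ← add_assoc, e2]
    have f2 : w y + v (b * q) = v (c * p) := by
      rw [hbq, hvmul d p, hvmul c p, ← add_assoc, e3]
    have hmin : min (w x) (w y) + v (b * q) ≤ w (x + y) + v (b * q) := by
      rw [e1, ← min_add_add_right, f1, f2]
      exact hvadd (a * q) (c * p)
    by_cases hxy0 : x + y = 0
    · rw [hxy0, hw0]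
      exact le_top
    obtain ⟨α, hα⟩ := WithTop.ne_top_iff_exists.mp (hwne x hx)
    obtain ⟨β, hβ⟩ := WithTop.ne_top_iff_exists.mp (hwne y hy)
    obtain ⟨ω, hω⟩ := WithTop.ne_top_iff_exists.mp (hwne _ hxy0)
    obtain ⟨σ, hσ⟩ := WithTop.ne_top_iff_exists.mp (hvne _ hbq0)
    rw [← hα, ← hβ, ← hω, ← hσ, ← WithTop.coe_min, ← WithTop.coe_add, ← WithTop.coe_add,
      WithTop.coe_le_coe] at hmin
    rw [← hα, ← hβ, ← hω, ← WithTop.coe_min, WithTop.coe_le_coe]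
    exact le_of_add_le_add_right hmin
  refine ⟨w, ⟨⟨hwtop, hwmul, hwadd⟩, hwι, fun a b hb => hw _ a b hb rfl⟩, ?_⟩
  intro w' ⟨_, _, hrule'⟩
  funext x
  have h1' := hrule' (ra x) (rb x) (hrb x)
  rw [← hre x] at h1'
  have h2' := hw x (ra x) (rb x) (hrb x) (hre x)
  exact WithTop.add_right_cancel (hvne _ (hrb x)) (h1'.trans h2'.symm)
end

section
/- Let K be a field with valuation v : K → Γ ∪ {∞} (Γ a totally ordered abelian additive group), with valuation ring O_v and maximal ideal m_v. Let I be an ideal of the free K-algebra K⟨X⟩ = K⟨X₁,...,Xₙ⟩ generated by a subset G ⊆ O_v⟨X⟩ which is a monic Gröbner basis of I in K⟨X⟩ with respect to a monomial ordering ≺ on B_K, with LM(g) ≠ 1 for all g ∈ G, and endow A = K⟨X⟩/I with the Γ-filtration F^vA given by F^v_γA = { Σ_i λ_i w̄_i : λ_i ∈ F^v_γK, w̄_i ∈ N̄(G) }. Then F^vA is a strong filtration, i.e. F^v_{γ₁}A · F^v_{γ₂}A = F^v_{γ₁+γ₂}A for all γ₁, γ₂ ∈ Γ, and the associated Γ-graded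 K-algebra G(A) = ⊕_γ F^v_γA/F^v_{<γ}A is strongly Γ-graded, i.e. G(A)_{γ₁} · G(A)_{γ₂} = G(A)_{γ₁+γ₂} for all γ₁, γ₂ ∈ Γ. -/
open scoped Classical

/-- The `Γ`-filtration `F^v_γA = {Σᵢ λᵢ·w̄ᵢ : λᵢ ∈ F^v_γK, w̄ᵢ ∈ N̄(G)}` on `A = K⟨X⟩/I`
induced by a valuation `v` of `K` and the normal words mod `G`:  the additive subgroup of `A`
generated by the classes of the elements `λ·u` with `v λ ≥ -γ` and `u ∈ N(G)`. -/
noncomputable def valInducedFiltration {K : Type} [Field K] {Γ : Type}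
    [AddCommGroup Γ] [LinearOrder Γ] [IsOrderedAddMonoid Γ] (v : K → WithTop Γ) {n : ℕ} (o : MonomialOrdering n)
    (G : Set (FreeAlg K n)) (I : TwoSidedIdeal (FreeAlg K n)) (γ : Γ) :
    AddSubgroup (QuotAlg I) :=
  AddSubgroup.closure
    {x : QuotAlg I | ∃ lam : K, ((-γ : Γ) : WithTop Γ) ≤ v lam ∧ ∃ u ∈ NSet o G,
      x = quotProj I (MonoidAlgebra.single u lam)}

namespace GBVal

open MonoidAlgebra

variable {K : Type} [Field K] {Γ : Type} [AddCommGroup Γ] [LinearOrder Γ] [IsOrderedAddMonoid Γ] {n : ℕ}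

theorem exists_o_max (o : MonomialOrdering n) (s : Finset (Word n)) :
    s.Nonempty → ∃ m ∈ s, ∀ t ∈ s, o.le t m := by
  classical
  induction s using Finset.induction_on with
  | empty => rintro ⟨x, hx⟩; simp at hx
  | @insert a s ha ih =>
    intro _
    rcases s.eq_empty_or_nonempty with rfl | hs
    · refine ⟨a, by simp, ?_⟩
      intro t ht
      simp only [Finset.mem_insert, Finset.notMem_empty, or_false] at ht
      exact Or.inl ht
    · obtain ⟨m, hm, hmax⟩ := ih hs
      haveI := o.strictTotal
      rcases trichotomous_of o.lt a m with h | h | h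
      · refine ⟨m, Finset.mem_insert_of_mem hm, ?_⟩
        intro t ht
        rcases Finset.mem_insert.mp ht with rfl | ht
        · exact Or.inr h
        · exact hmax t ht
      · subst h
        exact ⟨a, Finset.mem_insert_self a s, fun t ht => by
          rcases Finset.mem_insert.mp ht with rfl | ht
          · exact Or.inl rfl
          · exact hmax t ht⟩
      · refine ⟨a, Finset.mem_insert_self a s, ?_⟩
        intro t ht
        rcases Finset.mem_insert.mp ht with rfl | ht
        · exact Or.inl rfl
        · rcases hmax t ht with rfl | h'
          · exact Or.inr h
          · exact Or.inr (o.strictTotal.trans t m a h' h)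

theorem LM_spec (o : MonomialOrdering n) {f : FreeAlg K n} (hf : f ≠ 0) :
    LM o f ∈ f.coeff.support ∧ ∀ u ∈ f.coeff.support, o.le u (LM o f) := by
  have h : ∃ w, w ∈ f.coeff.support ∧ ∀ u ∈ f.coeff.support, o.le u w := by
    obtain ⟨m, hm, hmax⟩ := exists_o_max o f.coeff.support (Finsupp.support_nonempty_iff.mpr (by simpa using hf))
    exact ⟨m, hm, hmax⟩
  rw [LM, dif_pos h]
  exact h.choose_spec

theorem phi_inj (w s : Word n) : Function.Injective (fun u : Word n => w * u * s) :=
  fun a b h => by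
    simp only [] at h
    exact mul_left_cancel (mul_right_cancel h)

theorem trimul (w s : Word n) (c d : K) (f : FreeAlg K n) :
    ((MonoidAlgebra.single w c : FreeAlg K n) * f * MonoidAlgebra.single s d).coeff
      = Finsupp.mapDomain (fun u => w * u * s) ((c * d) • f.coeff) := by
  induction f using MonoidAlgebra.induction_linear with
  | zero => simp
  | add x y hx hy =>
    rw [mul_add, add_mul, MonoidAlgebra.coeff_add, hx, hy, MonoidAlgebra.coeff_add, smul_add,
      Finsupp.mapDomain_add]
  | single a b =>
    rw [MonoidAlgebra.single_mul_single, MonoidAlgebra.single_mul_single,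
      MonoidAlgebra.coeff_single, MonoidAlgebra.coeff_single, Finsupp.smul_single,
      Finsupp.mapDomain_single, smul_eq_mul]
    congr 1
    ring

section Val

variable {v : K → WithTop Γ}

theorem v_zero (hv : IsValuationFn v) : v 0 = ⊤ := (hv.1 0).mpr rfl

theorem v_ne_top (hv : IsValuationFn v) {a : K} (ha : a ≠ 0) : v a ≠ ⊤ := fun h => ha ((hv.1 a).mp h)

theorem v_one (hv : IsValuationFn v) : v 1 = 0 := by
  have h : v (1 : K) = v 1 + v 1 := by
    have h0 := hv.2.1 1 1
    rw [one_mul] at h0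
    exact h0
  obtain ⟨a, ha⟩ := WithTop.ne_top_iff_exists.mp (v_ne_top hv (one_ne_zero : (1:K) ≠ 0))
  rw [← ha] at h ⊢
  norm_cast at h ⊢
  have h2 : a + a = a + 0 := by rw [add_zero]; exact h.symm
  exact add_left_cancel h2

theorem v_neg_one (hv : IsValuationFn v) : v (-1 : K) = 0 := by
  have h : v (-1 : K) + v (-1 : K) = 0 := by
    rw [← hv.2.1, neg_one_mul, neg_neg]; exact v_one hv
  obtain ⟨a, ha⟩ := WithTop.ne_top_iff_exists.mp (v_ne_top hv (neg_ne_zero.mpr (one_ne_zero : (1:K) ≠ 0)))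
  rw [← ha] at h ⊢
  norm_cast at h ⊢
  rcases lt_trichotomy a 0 with h1 | h1 | h1
  · have h2 := add_lt_add h1 h1
    rw [h, add_zero] at h2
    exact absurd h2 (lt_irrefl 0)
  · exact h1
  · have h2 := add_lt_add h1 h1
    rw [h, add_zero] at h2
    exact absurd h2 (lt_irrefl 0)

theorem v_neg (hv : IsValuationFn v) (a : K) : v (-a) = v a := by
  have : (-a : K) = -1 * a := by ring
  rw [this, hv.2.1, v_neg_one hv, zero_add]

end Val

section Filt

variable (v : K → WithTop Γ) (o : MonomialOrdering n) (G : Set (FreeAlg K n))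
  (I : TwoSidedIdeal (FreeAlg K n))

theorem normal_mem (γ : Γ) (f : FreeAlg K n)
    (hc : ∀ t, ((-γ : Γ) : WithTop Γ) ≤ v (f.coeff t))
    (hn : ∀ t ∈ f.coeff.support, t ∈ NSet o G) :
    quotProj I f ∈ valInducedFiltration v o G I γ := by
  have h1 : quotProj I f = ∑ t ∈ f.coeff.support, quotProj I (MonoidAlgebra.single t (f.coeff t)) := by
    conv_lhs => rw [← MonoidAlgebra.sum_coeff_single f]
    rw [Finsupp.sum, map_sum]
  rw [h1]
  exact AddSubgroup.sum_mem _ fun t ht =>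
    AddSubgroup.subset_closure ⟨f.coeff t, hc t, t, hn t ht, rfl⟩

theorem bounded_mem (hv : IsValuationFn v)
    (hGO : ∀ g ∈ G, ∀ u : Word n, (0 : WithTop Γ) ≤ v (g.coeff u))
    (hGB : IsMonicGB o G I) (γ : Γ) :
    ∀ u : Word n, ∀ f : FreeAlg K n, (∀ t, ((-γ : Γ) : WithTop Γ) ≤ v (f.coeff t)) →
      (∀ t ∈ f.coeff.support, t ∉ NSet o G → o.le t u) →
      quotProj I f ∈ valInducedFiltration v o G I γ := by
  intro u
  refine o.wellFounded.induction (C := fun x => ∀ f : FreeAlg K n,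
      (∀ t, ((-γ : Γ) : WithTop Γ) ≤ v (f.coeff t)) →
      (∀ t ∈ f.coeff.support, t ∉ NSet o G → o.le t x) →
      quotProj I f ∈ valInducedFiltration v o G I γ) u ?_
  intro x ih f hc hb
  classical
  by_cases hall : ∀ t ∈ f.coeff.support, t ∈ NSet o G
  · exact normal_mem v o G I γ f hc hall
  · push_neg at hall
    obtain ⟨t₀, ht₀s, ht₀n⟩ := hall
    set S : Finset (Word n) := f.coeff.support.filter (fun t => t ∉ NSet o G) with hS
    have hSne : S.Nonempty := ⟨t₀, by simp [hS, ht₀s, ht₀n]⟩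
    obtain ⟨m, hmS, hmax⟩ := exists_o_max o S hSne
    have hm_sup : m ∈ f.coeff.support := (Finset.mem_filter.mp hmS).1
    have hm_nn : m ∉ NSet o G := (Finset.mem_filter.mp hmS).2
    have hex : ∃ g ∈ G, WordDvd (LM o g) m := by
      by_contra h
      push_neg at h
      exact hm_nn (fun g hg => h g hg)
    obtain ⟨g, hgG, w, s, hm_eq⟩ := hex
    obtain ⟨hg0, hgLC⟩ := hGB.2.1 g hgG
    have hmle : o.le m x := hb m hm_sup hm_nn
    set φ : Word n → Word n := fun u => w * u * s with hφ
    have hφinj : Function.Injective φ := phi_inj w s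
    set q : FreeAlg K n := MonoidAlgebra.single w (f.coeff m) * g * MonoidAlgebra.single s 1 with hq
    have hqI : q ∈ I := I.mul_mem_right _ _ (I.mul_mem_left _ _ (hGB.1 g hgG))
    have hqmap : q.coeff = Finsupp.mapDomain φ ((f.coeff m) • g.coeff) := by
      rw [hq, trimul, mul_one]
    set f' : FreeAlg K n := f - q with hf'
    have hproj : quotProj I f = quotProj I f' := by
      have hq0 : quotProj I q = 0 := by
        have h0 : quotProj I q = quotProj I 0 :=
          RingQuot.mkRingHom_rel (by simpa using hqI)
        simpa using h0
      rw [hf', map_sub, hq0, sub_zero]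
    have hqcoe : ∀ t, q.coeff t = 0 ∨ ∃ u', t = φ u' ∧ q.coeff t = f.coeff m * g.coeff u' := by
      intro t
      by_cases h : ∃ u', t = φ u'
      · obtain ⟨u', rfl⟩ := h
        refine Or.inr ⟨u', rfl, ?_⟩
        rw [hqmap, Finsupp.mapDomain_apply hφinj, Finsupp.smul_apply, smul_eq_mul]
      · refine Or.inl ?_
        rw [hqmap, Finsupp.mapDomain_notin_range]
        rintro ⟨u', hu'⟩
        exact h ⟨u', hu'.symm⟩
    have hfm_q : q.coeff m = f.coeff m := by
      have hmφ : m = φ (LM o g) := hm_eq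
      rw [hqmap, hmφ, Finsupp.mapDomain_apply hφinj, Finsupp.smul_apply, smul_eq_mul]
      have : g.coeff (LM o g) = 1 := hgLC
      rw [this, mul_one]
    have hf'm : f'.coeff m = 0 := by
      rw [hf', MonoidAlgebra.coeff_sub, Finsupp.sub_apply, hfm_q, sub_self]
    have hc' : ∀ t, ((-γ : Γ) : WithTop Γ) ≤ v (f'.coeff t) := by
      intro t
      have h1 : f'.coeff t = f.coeff t + -(q.coeff t) := by
        rw [hf', MonoidAlgebra.coeff_sub, Finsupp.sub_apply]; ring
      rw [h1]
      refine le_trans (le_min (hc t) ?_) (hv.2.2 _ _)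
      rw [v_neg hv]
      rcases hqcoe t with h | ⟨u', -, h⟩
      · rw [h, v_zero hv]; exact le_top
      · rw [h, hv.2.1]
        have h2 : ((-γ : Γ) : WithTop Γ) = ((-γ : Γ) : WithTop Γ) + 0 := by rw [add_zero]
        rw [h2]
        exact add_le_add (hc m) (hGO g hgG u')
    have hb' : ∀ t ∈ f'.coeff.support, t ∉ NSet o G → o.lt t m := by
      intro t hts htn
      have htne : t ≠ m := fun h => by
        rw [h] at hts; exact (Finsupp.mem_support_iff.mp hts) hf'm
      by_cases hfs : t ∈ S
      · rcases hmax t hfs with h | h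
        · exact absurd h htne
        · exact h
      · have hft : f.coeff t = 0 := by
          by_contra h
          exact hfs (Finset.mem_filter.mpr ⟨Finsupp.mem_support_iff.mpr h, htn⟩)
        have hqt : q.coeff t ≠ 0 := by
          intro h
          apply Finsupp.mem_support_iff.mp hts
          rw [hf', MonoidAlgebra.coeff_sub, Finsupp.sub_apply, hft, h, sub_zero]
        rcases hqcoe t with h | ⟨u', hteq, heq⟩
        · exact absurd h hqt
        · have hgu : g.coeff u' ≠ 0 := by
            intro h; apply hqt; rw [heq, h, mul_zero]
          have hus : u' ∈ g.coeff.support := Finsupp.mem_support_iff.mpr hgu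
          have hune : u' ≠ LM o g := by
            intro h; apply htne
            rw [hteq, h]; exact hm_eq.symm
          have hul : o.lt u' (LM o g) := by
            rcases (LM_spec o hg0).2 u' hus with h | h
            · exact absurd h hune
            · exact h
          rw [hteq, hm_eq]
          exact o.mul_compat w u' (LM o g) s hul
    rw [hproj]
    by_cases hall' : ∀ t ∈ f'.coeff.support, t ∈ NSet o G
    · exact normal_mem v o G I γ f' hc' hall'
    · push_neg at hall'
      obtain ⟨t₁, h1, h2⟩ := hall'
      set S' : Finset (Word n) := f'.coeff.support.filter (fun t => t ∉ NSet o G) with hS'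
      have hS'ne : S'.Nonempty := ⟨t₁, by simp [hS', h1, h2]⟩
      obtain ⟨m', hm'S, hmax'⟩ := exists_o_max o S' hS'ne
      have hm'm : o.lt m' m :=
        hb' m' (Finset.mem_filter.mp hm'S).1 (Finset.mem_filter.mp hm'S).2
      have hm'x : o.lt m' x := by
        rcases hmle with rfl | h
        · exact hm'm
        · exact o.strictTotal.trans m' m x hm'm h
      refine ih m' hm'x f' hc' ?_
      intro t ht htn
      exact hmax' t (Finset.mem_filter.mpr ⟨ht, htn⟩)

theorem coeff_mem (hv : IsValuationFn v)
    (hGO : ∀ g ∈ G, ∀ u : Word n, (0 : WithTop Γ) ≤ v (g.coeff u))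
    (hGB : IsMonicGB o G I) (γ : Γ) (f : FreeAlg K n)
    (hc : ∀ t, ((-γ : Γ) : WithTop Γ) ≤ v (f.coeff t)) :
    quotProj I f ∈ valInducedFiltration v o G I γ := by
  by_cases hf : f = 0
  · rw [hf, map_zero]; exact zero_mem _
  · exact bounded_mem v o G I hv hGO hGB γ (LM o f) f hc
      (fun t ht _ => (LM_spec o hf).2 t ht)

theorem mul_mem_filt (hv : IsValuationFn v)
    (hGO : ∀ g ∈ G, ∀ u : Word n, (0 : WithTop Γ) ≤ v (g.coeff u))
    (hGB : IsMonicGB o G I) (γ₁ γ₂ : Γ) :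
    ∀ a ∈ valInducedFiltration v o G I γ₁, ∀ b ∈ valInducedFiltration v o G I γ₂,
      a * b ∈ valInducedFiltration v o G I (γ₁ + γ₂) := by
  have key : ∀ x, (∃ lam : K, ((-γ₁ : Γ) : WithTop Γ) ≤ v lam ∧ ∃ u ∈ NSet o G,
      x = quotProj I (MonoidAlgebra.single u lam)) →
      ∀ y, (∃ mu : K, ((-γ₂ : Γ) : WithTop Γ) ≤ v mu ∧ ∃ w ∈ NSet o G,
      y = quotProj I (MonoidAlgebra.single w mu)) →
      x * y ∈ valInducedFiltration v o G I (γ₁ + γ₂) := by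
    rintro x ⟨lam, hlam, u, hu, rfl⟩ y ⟨mu, hmu, w, hw, rfl⟩
    rw [← map_mul, MonoidAlgebra.single_mul_single]
    refine coeff_mem v o G I hv hGO hGB _ _ ?_
    intro t
    classical
    show ((-(γ₁ + γ₂) : Γ) : WithTop Γ) ≤ v ((MonoidAlgebra.single (u * w) (lam * mu)).coeff t)
    rw [MonoidAlgebra.coeff_single, Finsupp.single_apply]
    split_ifs with h
    · rw [hv.2.1, neg_add, WithTop.coe_add]
      exact add_le_add hlam hmu
    · rw [v_zero hv]; exact le_top
  intro a ha b hb
  have ha' : a ∈ AddSubgroup.closure _ := ha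
  have hb' : b ∈ AddSubgroup.closure _ := hb
  refine AddSubgroup.closure_induction
    (k := {x : QuotAlg I | ∃ lam : K, ((-γ₂ : Γ) : WithTop Γ) ≤ v lam ∧ ∃ u ∈ NSet o G,
      x = quotProj I (MonoidAlgebra.single u lam)})
    (p := fun y _ => a * y ∈ valInducedFiltration v o G I (γ₁ + γ₂)) ?_ ?_ ?_ ?_ hb'
  · intro y hy
    refine AddSubgroup.closure_induction
      (k := {x : QuotAlg I | ∃ lam : K, ((-γ₁ : Γ) : WithTop Γ) ≤ v lam ∧ ∃ u ∈ NSet o G,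
        x = quotProj I (MonoidAlgebra.single u lam)})
      (p := fun z _ => z * y ∈ valInducedFiltration v o G I (γ₁ + γ₂)) ?_ ?_ ?_ ?_ ha'
    · intro z hz; exact key z hz y hy
    · show (0 : QuotAlg I) * y ∈ _
      rw [zero_mul]; exact zero_mem _
    · intro z₁ z₂ _ _ h1 h2
      show (z₁ + z₂) * y ∈ _
      rw [add_mul]; exact add_mem h1 h2
    · intro z _ h
      show (-z) * y ∈ _
      exact neg_mul z y ▸ neg_mem h
  · show a * (0 : QuotAlg I) ∈ _
    rw [mul_zero]; exact zero_mem _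
  · intro y₁ y₂ _ _ h1 h2
    show a * (y₁ + y₂) ∈ _
    rw [mul_add]; exact add_mem h1 h2
  · intro y _ h
    show a * (-y) ∈ _
    exact mul_neg a y ▸ neg_mem h

theorem one_normal (o : MonomialOrdering n) (G : Set (FreeAlg K n))
    (hLM1 : ∀ g ∈ G, LM o g ≠ 1) : (1 : Word n) ∈ NSet o G := by
  rintro g hg ⟨w, s, h⟩
  apply hLM1 g hg
  have hlen := congrArg FreeMonoid.length h
  rw [FreeMonoid.length_one, FreeMonoid.length_mul, FreeMonoid.length_mul] at hlen
  have : FreeMonoid.length (LM o g) = 0 := by omega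
  exact FreeMonoid.length_eq_zero.mp this

end Filt

end GBVal


/-- **Theorem 6.3 (iv).**  Let `K` be a field with a valuation `v : K → Γ ∪ {∞}`, with
valuation ring `O_v = {λ : v λ ≥ 0}`, and let `I` be an ideal of `K⟨X₁,...,Xₙ⟩` generated by
a subset `G ⊆ O_v⟨X⟩` which is a monic Gröbner basis of `I` in `K⟨X⟩` with `LM(g) ≠ 1` for
all `g ∈ G`.  Endow `A = K⟨X⟩/I` with the filtration
`F^v_γA = {Σ λᵢ w̄ᵢ : v λᵢ ≥ -γ, w̄ᵢ ∈ N̄(G)}`.  Then `F^vA` is a strong filtration, i.e.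
`F^v_{γ₁}A · F^v_{γ₂}A = F^v_{γ₁+γ₂}A` for all `γ₁, γ₂` (the left side being the additive
subgroup generated by the products), and the associated graded algebra `G(A)` is strongly
`Γ`-graded: every element of `G(A)_{γ₁+γ₂} = F^v_{γ₁+γ₂}A/F^v_{<γ₁+γ₂}A` is a sum of
products of elements of `G(A)_{γ₁}` and `G(A)_{γ₂}`. -/
theorem induced_filtration_strong {K : Type} [Field K] {Γ : Type}
    [AddCommGroup Γ] [LinearOrder Γ] [IsOrderedAddMonoid Γ] (v : K → WithTop Γ) (hv : IsValuation v) {n : ℕ}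
    (o : MonomialOrdering n) (G : Set (FreeAlg K n)) (I : TwoSidedIdeal (FreeAlg K n))
    (hGO : ∀ g ∈ G, ∀ u : Word n, (0 : WithTop Γ) ≤ v (g.coeff u))
    (hgen : I = TwoSidedIdeal.span G) (hGB : IsMonicGB o G I)
    (hLM1 : ∀ g ∈ G, LM o g ≠ 1) :
    (∀ γ₁ γ₂ : Γ,
      AddSubgroup.closure
        {x : QuotAlg I | ∃ a ∈ valInducedFiltration v o G I γ₁,
          ∃ b ∈ valInducedFiltration v o G I γ₂, x = a * b} =
        valInducedFiltration v o G I (γ₁ + γ₂)) ∧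
    (∀ γ₁ γ₂ : Γ, ∀ c ∈ valInducedFiltration v o G I (γ₁ + γ₂),
      ∃ (m : ℕ) (a b : Fin m → QuotAlg I),
        (∀ i, a i ∈ valInducedFiltration v o G I γ₁) ∧
        (∀ i, b i ∈ valInducedFiltration v o G I γ₂) ∧
        (c - ∑ i, a i * b i = 0 ∨
          ∃ ρ < γ₁ + γ₂, c - ∑ i, a i * b i ∈ valInducedFiltration v o G I ρ)) := by
  obtain ⟨hsurj, hvf⟩ := hv
  have hA : ∀ γ₁ γ₂ : Γ,
      AddSubgroup.closure
        {x : QuotAlg I | ∃ a ∈ valInducedFiltration v o G I γ₁,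
          ∃ b ∈ valInducedFiltration v o G I γ₂, x = a * b} =
        valInducedFiltration v o G I (γ₁ + γ₂) := by
    intro γ₁ γ₂
    apply le_antisymm
    · refine (AddSubgroup.closure_le _).mpr ?_
      rintro x ⟨a, ha, b, hb, rfl⟩
      exact GBVal.mul_mem_filt v o G I hvf hGO hGB γ₁ γ₂ a ha b hb
    · refine (AddSubgroup.closure_le _).mpr ?_
      rintro x ⟨lam, hlam, u, hu, rfl⟩
      obtain ⟨μ, hμ⟩ := hsurj ((-γ₁ : Γ) : WithTop Γ)
      have hμ0 : μ ≠ 0 := by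
        intro h
        rw [h, GBVal.v_zero hvf] at hμ
        exact (WithTop.coe_ne_top (a := (-γ₁ : Γ))) hμ.symm
      have hμinv : v μ⁻¹ = ((γ₁ : Γ) : WithTop Γ) := by
        have h1 : v μ + v μ⁻¹ = 0 := by
          rw [← hvf.2.1, mul_inv_cancel₀ hμ0, GBVal.v_one hvf]
        rw [hμ] at h1
        obtain ⟨b, hb⟩ := WithTop.ne_top_iff_exists.mp (GBVal.v_ne_top hvf (inv_ne_zero hμ0))
        rw [← hb] at h1 ⊢
        norm_cast at h1 ⊢
        exact (neg_add_eq_zero.mp h1).symm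
      have haF : quotProj I (MonoidAlgebra.single (1 : Word n) μ)
          ∈ valInducedFiltration v o G I γ₁ :=
        AddSubgroup.subset_closure ⟨μ, le_of_eq hμ.symm, 1, GBVal.one_normal o G hLM1, rfl⟩
      have hbb : ((-γ₂ : Γ) : WithTop Γ) ≤ v (μ⁻¹ * lam) := by
        rw [hvf.2.1, hμinv]
        have h2 : ((-γ₂ : Γ) : WithTop Γ)
            = ((γ₁ : Γ) : WithTop Γ) + ((-(γ₁ + γ₂) : Γ) : WithTop Γ) := by
          rw [← WithTop.coe_add]
          norm_cast
          abel
        rw [h2]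
        exact add_le_add_right hlam _
      have hbF : quotProj I (MonoidAlgebra.single u (μ⁻¹ * lam))
          ∈ valInducedFiltration v o G I γ₂ :=
        AddSubgroup.subset_closure ⟨μ⁻¹ * lam, hbb, u, hu, rfl⟩
      have hab : quotProj I (MonoidAlgebra.single (1 : Word n) μ)
          * quotProj I (MonoidAlgebra.single u (μ⁻¹ * lam))
          = quotProj I (MonoidAlgebra.single u lam) := by
        rw [← map_mul, MonoidAlgebra.single_mul_single, one_mul, mul_inv_cancel_left₀ hμ0]
      exact AddSubgroup.subset_closure ⟨_, haF, _, hbF, hab.symm⟩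
  refine ⟨hA, ?_⟩
  intro γ₁ γ₂ c hc
  rw [← hA γ₁ γ₂] at hc
  have hrep : ∃ (m : ℕ) (a b : Fin m → QuotAlg I),
      (∀ i, a i ∈ valInducedFiltration v o G I γ₁) ∧
      (∀ i, b i ∈ valInducedFiltration v o G I γ₂) ∧
      c = ∑ i, a i * b i := by
    refine AddSubgroup.closure_induction
      (p := fun c _ => ∃ (m : ℕ) (a b : Fin m → QuotAlg I),
        (∀ i, a i ∈ valInducedFiltration v o G I γ₁) ∧
        (∀ i, b i ∈ valInducedFiltration v o G I γ₂) ∧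
        c = ∑ i, a i * b i) ?_ ?_ ?_ ?_ hc
    · rintro x ⟨a0, ha0, b0, hb0, rfl⟩
      exact ⟨1, fun _ => a0, fun _ => b0, fun _ => ha0, fun _ => hb0,
        by rw [Fin.sum_univ_one]⟩
    · exact ⟨0, Fin.elim0, Fin.elim0, fun i => i.elim0, fun i => i.elim0, by simp⟩
    · rintro x y _ _ ⟨m₁, a₁, b₁, h₁a, h₁b, h₁e⟩ ⟨m₂, a₂, b₂, h₂a, h₂b, h₂e⟩
      refine ⟨m₁ + m₂, Fin.append a₁ a₂, Fin.append b₁ b₂, ?_, ?_, ?_⟩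
      · intro i
        induction i using Fin.addCases with
        | left j => rw [Fin.append_left]; exact h₁a j
        | right j => rw [Fin.append_right]; exact h₂a j
      · intro i
        induction i using Fin.addCases with
        | left j => rw [Fin.append_left]; exact h₁b j
        | right j => rw [Fin.append_right]; exact h₂b j
      · rw [h₁e, h₂e, Fin.sum_univ_add]
        congr 1
        · exact Finset.sum_congr rfl fun j _ => by
            rw [Fin.append_left, Fin.append_left]
        · exact Finset.sum_congr rfl fun j _ => by
            rw [Fin.append_right, Fin.append_right]
    · rintro x _ ⟨m, a, b, hax, hbx, he⟩
      refine ⟨m, fun i => -(a i), b, fun i => neg_mem (hax i), hbx, ?_⟩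
      show -x = ∑ i, (-(a i)) * b i
      have h1 : ∀ j ∈ Finset.univ, (-(a j)) * b j = -(a j * b j) :=
        fun j _ => neg_mul (a j) (b j)
      rw [Finset.sum_congr rfl h1, Finset.sum_neg_distrib, ← he]
  obtain ⟨m, a, b, h1, h2, h3⟩ := hrep
  exact ⟨m, a, b, h1, h2, Or.inl (by rw [h3, sub_self])⟩
end
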